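/- Let $\mathfrak{g} = \mathfrak{h} \oplus \mathfrak{m}$ be a reductive decomposition of a finite-dimensional real Lie algebra with an $\operatorname{ad}(\mathfrak{h})$-invariant inner product on $\mathfrak{m}$, satisfying the GO-condition. Then $\mathfrak{g}$ is unimodular: $\operatorname{trace}(\operatorname{ad}_X) = 0$ for every $X \in \mathfrak{g}$. -/

import Mathlib

open LinearMap

private theorem skew_trace_zero {V : Type*} [AddCommGroup V] [Module ℝ V]
    [FiniteDimensional ℝ V]
    (B : LinearMap.BilinForm ℝ V) (hB : B.Nondegenerate)
    (T : V →ₗ[ℝ] V) (hT : ∀ x y, B (T x) y = - B x (T y)) :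
    LinearMap.trace ℝ V T = 0 := by
  set Φ := B.toDual hB with hΦ
  have key : Φ.symm.conj (Module.Dual.transpose (R := ℝ) T) = -T := by
    ext x
    apply Φ.injective
    rw [LinearEquiv.conj_apply]
    simp only [LinearMap.comp_apply, LinearEquiv.coe_coe, LinearEquiv.apply_symm_apply]
    ext y
    simp only [LinearEquiv.symm_symm]
    have h1 : (Module.Dual.transpose (R := ℝ) T) (Φ x) y = B x (T y) := rfl
    have h2 : Φ ((-T) x) y = B ((-T) x) y := rfl
    rw [h1, h2]
    simp only [LinearMap.neg_apply, map_neg, LinearMap.neg_apply]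
    rw [hT x y]
    ring
  have t1 : LinearMap.trace ℝ V (Φ.symm.conj (Module.Dual.transpose (R := ℝ) T))
      = LinearMap.trace ℝ V T := by
    rw [LinearMap.trace_conj', LinearMap.trace_transpose']
  rw [key] at t1
  simp only [map_neg] at t1
  linarith
/-- Gordon's lemma: a reductive decomposition `𝔤 = 𝔥 ⊕ 𝔪` with `ad(𝔥)`-invariant inner
product on `𝔪` satisfying the GO-condition forces `𝔤` to be unimodular:
`trace(ad_X) = 0` for all `X ∈ 𝔤`. -/
theorem stmt4 (𝔤 : Type*) [LieRing 𝔤] [LieAlgebra ℝ 𝔤] [Module.Finite ℝ 𝔤]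
    (h m : Submodule ℝ 𝔤) (hcompl : IsCompl h m)
    (hred : ∀ H ∈ h, ∀ X ∈ m, ⁅H, X⁆ ∈ m)
    (ip : 𝔤 →ₗ[ℝ] 𝔤 →ₗ[ℝ] ℝ)
    (ipsymm : ∀ X Y : 𝔤, ip X Y = ip Y X)
    (ippos : ∀ X ∈ m, X ≠ 0 → 0 < ip X X)
    (πm : 𝔤 →ₗ[ℝ] 𝔤)
    (hπm : ∀ X ∈ m, πm X = X) (hπh : ∀ H ∈ h, πm H = 0)
    (hinv : ∀ H ∈ h, ∀ X ∈ m, ∀ Y ∈ m, ip (πm ⁅H, X⁆) Y + ip X (πm ⁅H, Y⁆) = 0)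
    (hGO : ∀ X ∈ m, ∃ H ∈ h, ∀ Y ∈ m, ip (πm ⁅H + X, Y⁆) X = 0)
    -- effectivity: 𝔥 contains no nonzero ideal of 𝔤
    (heff : ∀ I : LieIdeal ℝ 𝔤, (I : Submodule ℝ 𝔤) ≤ h → I = ⊥)
    -- 𝔥 is the Lie algebra of a compact group, hence trace(ad_H) = 0 for H ∈ 𝔥
    (htrh : ∀ H ∈ h, LinearMap.trace ℝ 𝔤 (LieAlgebra.ad ℝ 𝔤 H) = 0) :
    ∀ X : 𝔤, LinearMap.trace ℝ 𝔤 (LieAlgebra.ad ℝ 𝔤 X) = 0 := by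
  classical
  have hFD : FiniteDimensional ℝ 𝔤 := ‹Module.Finite ℝ 𝔤›
  -- the modular character
  set f : 𝔤 →ₗ[ℝ] ℝ :=
    (LinearMap.trace ℝ 𝔤) ∘ₗ
      (letI := LieRing.ofAssociativeRing (A := Module.End ℝ 𝔤)
       letI := LieAlgebra.ofAssociativeAlgebra (R := ℝ) (A := Module.End ℝ 𝔤)
       (LieAlgebra.ad ℝ 𝔤).toLinearMap) with hfdef
  have hfapp : ∀ X : 𝔤, f X = LinearMap.trace ℝ 𝔤 (LieAlgebra.ad ℝ 𝔤 X) := fun X => rfl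
  have hfbracket : ∀ A B : 𝔤, f ⁅A, B⁆ = 0 := by
    intro A B
    have hAB : LieAlgebra.ad ℝ 𝔤 ⁅A, B⁆ =
        LieAlgebra.ad ℝ 𝔤 A * LieAlgebra.ad ℝ 𝔤 B
          - LieAlgebra.ad ℝ 𝔤 B * LieAlgebra.ad ℝ 𝔤 A := by
      ext x
      exact lie_lie A B x
    rw [hfapp, hAB, map_sub, LinearMap.trace_mul_comm, sub_self]
  -- decomposition of arbitrary elements
  have hdecomp : ∀ g : 𝔤, ∃ H ∈ h, ∃ Y ∈ m, g = H + Y := by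
    intro g
    have : g ∈ h ⊔ m := by rw [hcompl.sup_eq_top]; trivial
    obtain ⟨H, hH, Y, hY, hg⟩ := Submodule.mem_sup.mp this
    exact ⟨H, hH, Y, hY, hg.symm⟩
  have hPmem : ∀ g : 𝔤, πm g ∈ m := by
    intro g
    obtain ⟨H, hH, Y, hY, rfl⟩ := hdecomp g
    rw [map_add, hπh H hH, hπm Y hY, zero_add]
    exact hY
  have hQmem : ∀ g : 𝔤, g - πm g ∈ h := by
    intro g
    obtain ⟨H, hH, Y, hY, rfl⟩ := hdecomp g
    rw [map_add, hπh H hH, hπm Y hY, zero_add, add_sub_cancel_right]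
    exact hH
  -- the bilinear form on m
  set B : LinearMap.BilinForm ℝ m := ip.compl₁₂ m.subtype m.subtype with hBdef
  have hBapp : ∀ x y : m, B x y = ip (x : 𝔤) (y : 𝔤) := fun x y => rfl
  have hBsymm : ∀ x y : m, B x y = B y x := fun x y => ipsymm _ _
  have hBnd : B.Nondegenerate := by
    refine (LinearMap.IsRefl.nondegenerate_iff_separatingLeft
      (fun x y hxy => by rw [hBsymm]; exact hxy)).mpr ?_
    intro x hx
    by_contra hx0
    have hxc : (x : 𝔤) ≠ 0 := fun hc => hx0 (Subtype.ext hc)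
    have := ippos (x : 𝔤) x.2 hxc
    have h0 := hx x
    rw [hBapp] at h0
    linarith
  -- the representing vector of f on m
  set φ : m →ₗ[ℝ] ℝ := f ∘ₗ m.subtype with hφdef
  set X₀ : m := (B.toDual hBnd).symm φ with hX₀def
  have hrep : ∀ y : m, ip (X₀ : 𝔤) (y : 𝔤) = f (y : 𝔤) := by
    intro y
    have := LinearMap.BilinForm.apply_toDual_symm_apply (B := B) (hB := hBnd) φ y
    rw [hBapp] at this
    exact this
  set X : 𝔤 := (X₀ : 𝔤) with hXdef
  have hXm : X ∈ m := X₀.2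
  -- key claim from the GO condition
  have K : ∀ Y ∈ m, ip (πm ⁅Y, X⁆) Y = 0 := by
    intro Y hY
    obtain ⟨H, hH, hGOY⟩ := hGO Y hY
    have h1 := hGOY X hXm
    rw [add_lie, map_add] at h1
    have h3 := hinv H hH X hXm Y hY
    have h4 : ⁅H, Y⁆ ∈ m := hred H hH Y hY
    have h6 : ip X (πm ⁅H, Y⁆) = 0 := by
      rw [hπm _ h4]
      have := hrep ⟨⁅H, Y⁆, h4⟩
      simp only [Submodule.coe_mk] at this
      rw [this, hfbracket]
    rw [map_add, LinearMap.add_apply] at h1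
    linarith
  -- projections as endomorphisms
  set P : Module.End ℝ 𝔤 := πm with hPdef
  set Q : Module.End ℝ 𝔤 := 1 - P with hQdef
  have hQapp : ∀ g : 𝔤, Q g = g - πm g := fun g => rfl
  have hPP : P * P = P := by
    ext g
    exact hπm _ (hPmem g)
  have hQP : Q * P = 0 := by
    rw [hQdef, sub_mul, one_mul, hPP, sub_self]
  have hPQ : P * Q = 0 := by
    rw [hQdef, mul_sub, mul_one, hPP, sub_self]
  set D : Module.End ℝ 𝔤 := LieAlgebra.ad ℝ 𝔤 X with hDdef
  have hQDQ : Q * D * Q = 0 := by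
    ext g
    have hQg : Q g ∈ h := hQmem g
    have hDQg : D (Q g) ∈ m := by
      have : ⁅Q g, X⁆ ∈ m := hred _ hQg X hXm
      have h2 : D (Q g) = -⁅Q g, X⁆ := by
        show ⁅X, Q g⁆ = -⁅Q g, X⁆
        rw [← lie_skew]
      rw [h2]
      exact neg_mem this
    show Q (D (Q g)) = 0
    rw [hQapp, hπm _ hDQg, sub_self]
  -- trace of D equals trace of P * D * P
  have htr1 : LinearMap.trace ℝ 𝔤 D = LinearMap.trace ℝ 𝔤 (P * D * P) := by
    have hD : D = P * D * P + P * D * Q + (Q * D * P + Q * D * Q) := by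
      have hPQ1 : P + Q = 1 := by rw [hQdef]; abel
      have : (P + Q) * D * (P + Q) = D := by rw [hPQ1, one_mul, mul_one]
      calc D = (P + Q) * D * (P + Q) := this.symm
        _ = P * D * P + P * D * Q + (Q * D * P + Q * D * Q) := by
          rw [add_mul, add_mul, mul_add, mul_add]
    have e1 : LinearMap.trace ℝ 𝔤 (P * D * Q) = 0 := by
      rw [mul_assoc, LinearMap.trace_mul_comm, mul_assoc, hQP, mul_zero, map_zero]
    have e2 : LinearMap.trace ℝ 𝔤 (Q * D * P) = 0 := by
      rw [mul_assoc, LinearMap.trace_mul_comm, mul_assoc, hPQ, mul_zero, map_zero]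
    have e3 : LinearMap.trace ℝ 𝔤 (Q * D * Q) = 0 := by
      rw [hQDQ, map_zero]
    calc LinearMap.trace ℝ 𝔤 D
        = LinearMap.trace ℝ 𝔤 (P * D * P + P * D * Q + (Q * D * P + Q * D * Q)) := by
          rw [← hD]
      _ = LinearMap.trace ℝ 𝔤 (P * D * P) := by
          rw [map_add, map_add, map_add, e1, e2, e3]; ring
  -- restrict P * D * P to m
  set E : Module.End ℝ 𝔤 := P * D * P with hEdef
  have hEapp : ∀ g : 𝔤, E g = πm ⁅X, πm g⁆ := fun g => rfl
  have hEmem : ∀ g : 𝔤, E g ∈ m := fun g => hPmem _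
  have hEmem' : ∀ g ∈ m, E g ∈ m := fun g _ => hEmem g
  set T : m →ₗ[ℝ] m := E.restrict hEmem' with hTdef
  have htr2 : LinearMap.trace ℝ m T = LinearMap.trace ℝ 𝔤 E :=
    E.trace_restrict_eq_of_forall_mem m hEmem
  have hTcoe : ∀ y : m, (T y : 𝔤) = πm ⁅X, (y : 𝔤)⁆ := by
    intro y
    show E (y : 𝔤) = πm ⁅X, (y : 𝔤)⁆
    rw [hEapp, hπm _ y.2]
  have hdiag : ∀ y : m, B (T y) y = 0 := by
    intro y
    rw [hBapp, hTcoe]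
    have : ⁅X, (y : 𝔤)⁆ = -⁅(y : 𝔤), X⁆ := by rw [← lie_skew]
    rw [this, map_neg, map_neg, LinearMap.neg_apply, K _ y.2, neg_zero]
  have hskew : ∀ x y : m, B (T x) y = - B x (T y) := by
    intro x y
    have h0 := hdiag (x + y)
    simp only [map_add, LinearMap.add_apply] at h0
    have h1 : B (T y) x = B x (T y) := hBsymm _ _
    linarith [hdiag x, hdiag y]
  have htrT : LinearMap.trace ℝ m T = 0 := skew_trace_zero B hBnd T hskew
  have hfX : f X = 0 := by
    rw [hfapp]
    show LinearMap.trace ℝ 𝔤 D = 0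
    rw [htr1, ← htr2, htrT]
  -- conclude X₀ = 0, hence f vanishes on m
  have hX0 : X = 0 := by
    by_contra hne
    have hpos := ippos X hXm hne
    have := hrep X₀
    rw [hfX] at this
    linarith
  have hfm : ∀ Y ∈ m, f Y = 0 := by
    intro Y hY
    have := hrep ⟨Y, hY⟩
    simp only [Submodule.coe_mk] at this
    rw [← this, hX0, map_zero, LinearMap.zero_apply]
  -- finish
  intro Z
  obtain ⟨H, hH, Y, hY, rfl⟩ := hdecomp Z
  rw [← hfapp, map_add, hfm Y hY, add_zero]
  rw [hfapp]
  exact htrh H hH
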